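/- Let x₁,…,xₙ, y₁,…,yₙ be vectors in an inner product space and r₁,…,rₙ positive reals. Then ∑_{i<j} ‖√(rᵢ/rⱼ)xᵢ − √(rⱼ/rᵢ)xⱼ‖² + ∑_{i<j} ‖√(rᵢ/rⱼ)yᵢ − √(rⱼ/rᵢ)yⱼ‖² = ∑_{i,j=1}^n ‖√(rᵢ/rⱼ)xᵢ − √(rⱼ/rᵢ)yⱼ‖² − ‖∑_{i=1}^n (xᵢ−yᵢ)‖². -/

import Mathlib

open Finset

/-- Sum over ordered pairs vs pairs i < j. -/
lemma pair_sum_aux {n : ℕ} (f : Fin n → Fin n → ℝ) :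
    ∑ i, ∑ j ∈ Finset.univ.filter (fun j => i < j), (f i j + f j i) + ∑ i, f i i
      = ∑ i, ∑ j, f i j := by
  have h3 : ∑ i, ∑ j ∈ Finset.univ.filter (fun j => i < j), f j i
      = ∑ i, ∑ j ∈ Finset.univ.filter (fun j => j < i), f i j := by
    simp_rw [Finset.sum_filter]
    exact Finset.sum_comm
  have h2 : ∀ i : Fin n, ∑ j, f i j =
      (∑ j ∈ Finset.univ.filter (fun j => i < j), f i j)
      + (∑ j ∈ Finset.univ.filter (fun j => j < i), f i j) + f i i := by
    intro i
    have d1 : Disjoint (Finset.univ.filter (fun j => i < j))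
        (Finset.univ.filter (fun j => j < i)) := by
      refine Finset.disjoint_left.mpr ?_
      intro a ha hb
      simp only [Finset.mem_filter, Finset.mem_univ, true_and] at ha hb
      exact absurd (ha.trans hb) (lt_irrefl i)
    have d2 : Disjoint (Finset.univ.filter (fun j => i < j)
        ∪ Finset.univ.filter (fun j => j < i)) ({i} : Finset (Fin n)) := by
      refine Finset.disjoint_left.mpr ?_
      intro a ha hb
      simp only [Finset.mem_union, Finset.mem_filter, Finset.mem_univ, true_and] at ha
      simp only [Finset.mem_singleton] at hb
      subst hb
      rcases ha with h | h <;> exact absurd h (lt_irrefl a)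
    have huniv : (Finset.univ : Finset (Fin n)) =
        (Finset.univ.filter (fun j => i < j) ∪ Finset.univ.filter (fun j => j < i))
        ∪ {i} := by
      ext j
      simp only [Finset.mem_union, Finset.mem_filter, Finset.mem_univ, true_and,
        Finset.mem_singleton]
      constructor
      · intro _
        rcases lt_trichotomy i j with h | h | h
        · exact Or.inl (Or.inl h)
        · exact Or.inr h.symm
        · exact Or.inl (Or.inr h)
      · intro _; trivial
    conv_lhs => rw [huniv]
    rw [Finset.sum_union d2, Finset.sum_union d1, Finset.sum_singleton]
  have h4 : ∑ i, ∑ j, f i j =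
      (∑ i, ∑ j ∈ Finset.univ.filter (fun j => i < j), f i j)
      + (∑ i, ∑ j ∈ Finset.univ.filter (fun j => j < i), f i j) + ∑ i, f i i := by
    simp_rw [h2]
    rw [Finset.sum_add_distrib, Finset.sum_add_distrib]
  rw [h4]
  simp_rw [Finset.sum_add_distrib]
  rw [h3]

lemma double_sum_swap {n : ℕ} (f : Fin n → Fin n → ℝ) :
    ∑ i, ∑ j, f i j = ∑ i, ∑ j, f j i := Finset.sum_comm

lemma sum2_add {n : ℕ} (f g : Fin n → Fin n → ℝ) :
    (∑ i, ∑ j, f i j) + (∑ i, ∑ j, g i j) = ∑ i, ∑ j, (f i j + g i j) := by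
  rw [← Finset.sum_add_distrib]
  exact Finset.sum_congr rfl fun i _ => (Finset.sum_add_distrib).symm

lemma sum2_sub {n : ℕ} (f g : Fin n → Fin n → ℝ) :
    ∑ i, ∑ j, (f i j - g i j) = (∑ i, ∑ j, f i j) - (∑ i, ∑ j, g i j) := by
  rw [← Finset.sum_sub_distrib]
  exact Finset.sum_congr rfl fun i _ => Finset.sum_sub_distrib _ _

theorem vector_weighted_parallelogram_identity
    {E : Type*} [NormedAddCommGroup E] [InnerProductSpace ℂ E]
    {n : ℕ} (x y : Fin n → E) (r : Fin n → ℝ) (hr : ∀ i, 0 < r i) :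
    (∑ i, ∑ j ∈ Finset.univ.filter (fun j => i < j),
        ‖Real.sqrt (r i / r j) • x i - Real.sqrt (r j / r i) • x j‖ ^ 2)
      + (∑ i, ∑ j ∈ Finset.univ.filter (fun j => i < j),
          ‖Real.sqrt (r i / r j) • y i - Real.sqrt (r j / r i) • y j‖ ^ 2)
      = (∑ i, ∑ j, ‖Real.sqrt (r i / r j) • x i - Real.sqrt (r j / r i) • y j‖ ^ 2)
        - ‖∑ i, (x i - y i)‖ ^ 2 := by
  letI : InnerProductSpace ℝ E := InnerProductSpace.rclikeToReal ℂ E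
  have key : ∀ (a b : ℝ), 0 < a → 0 < b → ∀ u v : E,
      ‖Real.sqrt (a / b) • u - Real.sqrt (b / a) • v‖ ^ 2
        = (a / b) * ‖u‖ ^ 2 + (b / a) * ‖v‖ ^ 2 - 2 * (inner ℝ u v : ℝ) := by
    intro a b ha hb u v
    rw [@norm_sub_sq_real, norm_smul, norm_smul, real_inner_smul_left, real_inner_smul_right]
    have hab : Real.sqrt (a / b) * Real.sqrt (b / a) = 1 := by
      rw [← Real.sqrt_mul (by positivity)]
      rw [show a / b * (b / a) = 1 by field_simp]
      exact Real.sqrt_one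
    have h1 : ‖Real.sqrt (a / b)‖ ^ 2 = a / b := by
      rw [Real.norm_eq_abs, sq_abs, Real.sq_sqrt (by positivity)]
    have h2 : ‖Real.sqrt (b / a)‖ ^ 2 = b / a := by
      rw [Real.norm_eq_abs, sq_abs, Real.sq_sqrt (by positivity)]
    rw [mul_pow, mul_pow, h1, h2]
    rw [show Real.sqrt (a / b) * (Real.sqrt (b / a) * (inner ℝ u v : ℝ))
        = (Real.sqrt (a / b) * Real.sqrt (b / a)) * (inner ℝ u v : ℝ) by ring, hab]
    ring
  have kx : ∀ i j, ‖Real.sqrt (r i / r j) • x i - Real.sqrt (r j / r i) • x j‖ ^ 2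
      = (r i / r j) * ‖x i‖ ^ 2 + (r j / r i) * ‖x j‖ ^ 2 - 2 * (inner ℝ (x i) (x j) : ℝ) :=
    fun i j => key _ _ (hr i) (hr j) _ _
  have ky : ∀ i j, ‖Real.sqrt (r i / r j) • y i - Real.sqrt (r j / r i) • y j‖ ^ 2
      = (r i / r j) * ‖y i‖ ^ 2 + (r j / r i) * ‖y j‖ ^ 2 - 2 * (inner ℝ (y i) (y j) : ℝ) :=
    fun i j => key _ _ (hr i) (hr j) _ _
  have kxy : ∀ i j, ‖Real.sqrt (r i / r j) • x i - Real.sqrt (r j / r i) • y j‖ ^ 2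
      = (r i / r j) * ‖x i‖ ^ 2 + (r j / r i) * ‖y j‖ ^ 2 - 2 * (inner ℝ (x i) (y j) : ℝ) :=
    fun i j => key _ _ (hr i) (hr j) _ _
  simp_rw [kx, ky, kxy]
  have hnorm : ‖∑ i, (x i - y i)‖ ^ 2
      = ∑ i, ∑ j, ((inner ℝ (x i) (x j) : ℝ) - (inner ℝ (x i) (y j) : ℝ)
          - (inner ℝ (y i) (x j) : ℝ) + (inner ℝ (y i) (y j) : ℝ)) := by
    rw [← real_inner_self_eq_norm_sq, sum_inner]
    refine Finset.sum_congr rfl fun i _ => ?_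
    rw [inner_sum]
    refine Finset.sum_congr rfl fun j _ => ?_
    rw [inner_sub_left, inner_sub_right, inner_sub_right]
    ring
  rw [hnorm]
  -- express the two triangular sums as full double sums
  have hx : ∑ i, ∑ j ∈ Finset.univ.filter (fun j => i < j),
      ((r i / r j) * ‖x i‖ ^ 2 + (r j / r i) * ‖x j‖ ^ 2 - 2 * (inner ℝ (x i) (x j) : ℝ))
      = ∑ i, ∑ j, ((r i / r j) * ‖x i‖ ^ 2 - (inner ℝ (x i) (x j) : ℝ)) := by
    rw [← pair_sum_aux (fun i j => (r i / r j) * ‖x i‖ ^ 2 - (inner ℝ (x i) (x j) : ℝ))]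
    have hdiag : ∑ i : Fin n, ((r i / r i) * ‖x i‖ ^ 2 - (inner ℝ (x i) (x i) : ℝ)) = 0 := by
      refine Finset.sum_eq_zero fun i _ => ?_
      rw [real_inner_self_eq_norm_sq, div_self (hr i).ne']
      ring
    rw [hdiag, add_zero]
    refine Finset.sum_congr rfl fun i _ => Finset.sum_congr rfl fun j _ => ?_
    rw [real_inner_comm (x j) (x i)]
    ring
  have hy : ∑ i, ∑ j ∈ Finset.univ.filter (fun j => i < j),
      ((r i / r j) * ‖y i‖ ^ 2 + (r j / r i) * ‖y j‖ ^ 2 - 2 * (inner ℝ (y i) (y j) : ℝ))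
      = ∑ i, ∑ j, ((r i / r j) * ‖y i‖ ^ 2 - (inner ℝ (y i) (y j) : ℝ)) := by
    rw [← pair_sum_aux (fun i j => (r i / r j) * ‖y i‖ ^ 2 - (inner ℝ (y i) (y j) : ℝ))]
    have hdiag : ∑ i : Fin n, ((r i / r i) * ‖y i‖ ^ 2 - (inner ℝ (y i) (y i) : ℝ)) = 0 := by
      refine Finset.sum_eq_zero fun i _ => ?_
      rw [real_inner_self_eq_norm_sq, div_self (hr i).ne']
      ring
    rw [hdiag, add_zero]
    refine Finset.sum_congr rfl fun i _ => Finset.sum_congr rfl fun j _ => ?_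
    rw [real_inner_comm (y j) (y i)]
    ring
  rw [hx, hy, eq_sub_iff_add_eq]
  -- remaining: full double-sum identity, using swap symmetry
  calc (∑ i, ∑ j, ((r i / r j) * ‖x i‖ ^ 2 - (inner ℝ (x i) (x j) : ℝ)))
        + (∑ i, ∑ j, ((r i / r j) * ‖y i‖ ^ 2 - (inner ℝ (y i) (y j) : ℝ)))
        + ∑ i, ∑ j, ((inner ℝ (x i) (x j) : ℝ) - (inner ℝ (x i) (y j) : ℝ)
            - (inner ℝ (y i) (x j) : ℝ) + (inner ℝ (y i) (y j) : ℝ))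
      = ∑ i, ∑ j, (((r i / r j) * ‖x i‖ ^ 2 - (inner ℝ (x i) (x j) : ℝ))
          + ((r i / r j) * ‖y i‖ ^ 2 - (inner ℝ (y i) (y j) : ℝ))
          + ((inner ℝ (x i) (x j) : ℝ) - (inner ℝ (x i) (y j) : ℝ)
            - (inner ℝ (y i) (x j) : ℝ) + (inner ℝ (y i) (y j) : ℝ))) := by
        rw [sum2_add, sum2_add]
    _ = ∑ i, ∑ j, (((r i / r j) * ‖x i‖ ^ 2 + (r j / r i) * ‖y j‖ ^ 2
            - 2 * (inner ℝ (x i) (y j) : ℝ))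
          + (((r i / r j) * ‖y i‖ ^ 2 + (inner ℝ (x i) (y j) : ℝ))
            - ((r j / r i) * ‖y j‖ ^ 2 + (inner ℝ (x j) (y i) : ℝ)))) := by
        refine Finset.sum_congr rfl fun i _ => Finset.sum_congr rfl fun j _ => ?_
        rw [real_inner_comm (y i) (x j)]
        ring
    _ = (∑ i, ∑ j, ((r i / r j) * ‖x i‖ ^ 2 + (r j / r i) * ‖y j‖ ^ 2
            - 2 * (inner ℝ (x i) (y j) : ℝ)))
        + ∑ i, ∑ j, (((r i / r j) * ‖y i‖ ^ 2 + (inner ℝ (x i) (y j) : ℝ))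
            - ((r j / r i) * ‖y j‖ ^ 2 + (inner ℝ (x j) (y i) : ℝ))) := by
        rw [sum2_add]
    _ = (∑ i, ∑ j, ((r i / r j) * ‖x i‖ ^ 2 + (r j / r i) * ‖y j‖ ^ 2
            - 2 * (inner ℝ (x i) (y j) : ℝ))) := by
        rw [sum2_sub (fun i j => (r i / r j) * ‖y i‖ ^ 2 + (inner ℝ (x i) (y j) : ℝ))
            (fun i j => (r j / r i) * ‖y j‖ ^ 2 + (inner ℝ (x j) (y i) : ℝ)),
          double_sum_swap (fun i j => (r i / r j) * ‖y i‖ ^ 2 + (inner ℝ (x i) (y j) : ℝ))]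
        ring
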